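/- One-step linear-combination bound for SGD (per-step form of Lemma 4.2): suppose γL ∈ (0,1) and set a := (1−γL)/(1+γL), b := −1, c := 2γL/(1+γL), and v := γσ_*²/(1−γL) (these are the constants a = 1 − γL(1+ε), c = γL(1+ε), v = γ(1+ε⁻¹)σ_*²/2 with ε = (1−γL)/(1+γL); note a + b + c = 0). Then for every x, z ∈ H, a·f(x) + b·f(z) + c·inf f ≤ (1/(2γ))‖x − z‖² − (1/(2γ)) E_{i∼D}[‖(x − γ∇f_i(x)) − z‖²] + v. -/

import Mathlib

open MeasureTheory Real
open scoped RealInnerProductSpace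


section aux
variable {H : Type*} [NormedAddCommGroup H] [InnerProductSpace ℝ H] [CompleteSpace H]

lemma aux_line_hasDerivAt {f : H → ℝ} {g : H → H} (hg : ∀ p, HasGradientAt f (g p) p)
    (x y : H) (t : ℝ) :
    HasDerivAt (fun s : ℝ => f (x + s • (y - x))) ⟪g (x + t • (y - x)), y - x⟫ t := by
  have hc : HasDerivAt (fun s : ℝ => x + s • (y - x)) (y - x) t := by
    simpa using ((hasDerivAt_id t).smul_const (y - x)).const_add x
  have h := ((hg (x + t • (y - x))).hasFDerivAt).comp_hasDerivAt t hc
  simpa [InnerProductSpace.toDual_apply_apply, Function.comp_def] using h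

lemma aux_inner_hasGradientAt (c : H) (p : H) :
    HasGradientAt (fun w => ⟪c, w⟫) c p :=
  (InnerProductSpace.toDual ℝ H c).hasFDerivAt

lemma aux_convex_grad_ineq {f : H → ℝ} {g : H → H} (hconv : ConvexOn ℝ Set.univ f)
    (hg : ∀ p, HasGradientAt f (g p) p) (x y : H) :
    f x + ⟪g x, y - x⟫ ≤ f y := by
  have hφ : ConvexOn ℝ Set.univ (fun s : ℝ => f (x + s • (y - x))) := by
    have h := hconv.comp_affineMap (AffineMap.lineMap x y : ℝ →ᵃ[ℝ] H)
    have he : (fun s : ℝ => f (x + s • (y - x))) = f ∘ (AffineMap.lineMap x y : ℝ →ᵃ[ℝ] H) := by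
      funext s
      simp [AffineMap.lineMap_apply_module', add_comm]
    rw [he]
    simpa using h
  have hd := aux_line_hasDerivAt hg x y 0
  simp only [zero_smul, add_zero] at hd
  have hslope := hφ.le_slope_of_hasDerivAt (Set.mem_univ (0:ℝ)) (Set.mem_univ (1:ℝ))
    one_pos hd
  rw [slope_def_field] at hslope
  simp at hslope
  linarith
end aux

section aux2
variable {H : Type*} [NormedAddCommGroup H] [InnerProductSpace ℝ H] [CompleteSpace H]

lemma aux_descent {f : H → ℝ} {g : H → H} {L : ℝ} (hL : 0 < L)
    (hg : ∀ p, HasGradientAt f (g p) p) (hlip : LipschitzWith L.toNNReal g) (x y : H) :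
    f y ≤ f x + ⟪g x, y - x⟫ + L / 2 * ‖y - x‖ ^ 2 := by
  set φ' : ℝ → ℝ := fun t => ⟪g (x + t • (y - x)), y - x⟫ with hφ'
  have hcont : Continuous φ' := by
    apply Continuous.inner
    · exact hlip.continuous.comp (by continuity)
    · exact continuous_const
  have hftc := intervalIntegral.integral_eq_sub_of_hasDerivAt
    (f := fun s : ℝ => f (x + s • (y - x))) (f' := φ') (a := 0) (b := 1)
    (fun t _ => aux_line_hasDerivAt hg x y t) (hcont.intervalIntegrable 0 1)
  have hbound : ∀ t ∈ Set.Icc (0:ℝ) 1, φ' t ≤ φ' 0 + L * ‖y - x‖ ^ 2 * t := by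
    intro t ht
    have hdiff : φ' t - φ' 0 = ⟪g (x + t • (y - x)) - g (x + (0:ℝ) • (y - x)), y - x⟫ := by
      rw [inner_sub_left]
    have hcs : ⟪g (x + t • (y - x)) - g (x + (0:ℝ) • (y - x)), y - x⟫ ≤
        ‖g (x + t • (y - x)) - g (x + (0:ℝ) • (y - x))‖ * ‖y - x‖ :=
      real_inner_le_norm _ _
    have hlipb : ‖g (x + t • (y - x)) - g (x + (0:ℝ) • (y - x))‖ ≤ L * (t * ‖y - x‖) := by
      have h2 : ‖(x + t • (y - x)) - (x + (0:ℝ) • (y - x))‖ = t * ‖y - x‖ := by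
        have e : (x + t • (y - x)) - (x + (0:ℝ) • (y - x)) = t • (y - x) := by simp
        rw [e, norm_smul]
        simp [abs_of_nonneg ht.1]
      have hd := hlip.dist_le_mul (x + t • (y - x)) (x + (0:ℝ) • (y - x))
      rw [dist_eq_norm, dist_eq_norm, h2, Real.coe_toNNReal L hL.le] at hd
      exact hd
    nlinarith [norm_nonneg (y - x), ht.1]
  have hint : (∫ t in (0:ℝ)..1, φ' t) ≤ ∫ t in (0:ℝ)..1, (φ' 0 + L * ‖y - x‖ ^ 2 * t) := by
    apply intervalIntegral.integral_mono_on zero_le_one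
    · exact hcont.intervalIntegrable 0 1
    · exact (by continuity : Continuous fun t : ℝ => φ' 0 + L * ‖y - x‖ ^ 2 * t).intervalIntegrable 0 1
    · exact hbound
  have hval : (∫ t in (0:ℝ)..1, (φ' 0 + L * ‖y - x‖ ^ 2 * t)) = φ' 0 + L / 2 * ‖y - x‖ ^ 2 := by
    have h1 : (∫ t in (0:ℝ)..1, (φ' 0 + L * ‖y - x‖ ^ 2 * t))
        = (∫ _t in (0:ℝ)..1, φ' 0) + ∫ t in (0:ℝ)..1, L * ‖y - x‖ ^ 2 * t :=
      intervalIntegral.integral_add (continuous_const.intervalIntegrable 0 1)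
        ((continuous_const.mul continuous_id).intervalIntegrable 0 1)
    rw [h1, intervalIntegral.integral_const_mul, integral_id]
    simp
    ring
  have h0 : φ' 0 = ⟪g x, y - x⟫ := by simp [hφ']
  simp only [one_smul, zero_smul, add_zero] at hftc
  have : f (x + (y - x)) = f y := by congr 1; abel
  rw [this] at hftc
  linarith [hftc ▸ (hint.trans_eq hval), hftc]
end aux2

section aux3
variable {H : Type*} [NormedAddCommGroup H] [InnerProductSpace ℝ H] [CompleteSpace H]

lemma aux_inner_convexOn (c : H) : ConvexOn ℝ Set.univ (fun w : H => ⟪c, w⟫) := by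
  refine ⟨convex_univ, fun u _ v _ p q hp hq hpq => ?_⟩
  simp [inner_add_right, inner_smul_right]

lemma aux_cocoercive {f : H → ℝ} {g : H → H} {L : ℝ} (hL : 0 < L)
    (hconv : ConvexOn ℝ Set.univ f) (hg : ∀ p, HasGradientAt f (g p) p)
    (hlip : LipschitzWith L.toNNReal g) (x y : H) :
    ‖g x - g y‖ ^ 2 ≤ 2 * L * (f x - f y - ⟪g y, x - y⟫) := by
  set h : H → ℝ := fun w => f w - ⟪g y, w⟫ with hh
  have hgh : ∀ p, HasGradientAt h (g p - g y) p := by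
    intro p
    have h1 := (hg p).hasFDerivAt.sub ((InnerProductSpace.toDual ℝ H (g y)).hasFDerivAt)
    rw [hasGradientAt_iff_hasFDerivAt, map_sub]
    exact h1
  have hhconv : ConvexOn ℝ Set.univ h := by
    have : ConcaveOn ℝ Set.univ (fun w : H => ⟪g y, w⟫) := by
      refine ⟨convex_univ, fun u _ v _ p q hp hq hpq => ?_⟩
      simp [inner_add_right, inner_smul_right]
    exact hconv.sub this
  have hhlip : LipschitzWith L.toNNReal (fun p => g p - g y) :=
    LipschitzWith.of_dist_le_mul fun p q => by
      simpa [dist_sub_right] using hlip.dist_le_mul p q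
  -- h is minimized at y
  have hmin : ∀ w, h y ≤ h w := by
    intro w
    have := aux_convex_grad_ineq hhconv hgh y w
    simpa using this
  -- descent step at x
  have hdes := aux_descent hL hgh hhlip x (x - L⁻¹ • (g x - g y))
  have he1 : (x - L⁻¹ • (g x - g y)) - x = -(L⁻¹ • (g x - g y)) := by abel
  rw [he1] at hdes
  have he2 : ⟪g x - g y, -(L⁻¹ • (g x - g y))⟫ = -(L⁻¹ * ‖g x - g y‖ ^ 2) := by
    rw [inner_neg_right, real_inner_smul_right, real_inner_self_eq_norm_sq]
  have he3 : ‖-(L⁻¹ • (g x - g y))‖ ^ 2 = L⁻¹ ^ 2 * ‖g x - g y‖ ^ 2 := by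
    rw [norm_neg, norm_smul]
    simp [abs_of_nonneg (inv_nonneg.mpr hL.le), mul_pow]
  rw [he2, he3] at hdes
  have hfinal := (hmin (x - L⁻¹ • (g x - g y))).trans hdes
  have hexp : h x - h y = f x - f y - ⟪g y, x - y⟫ := by
    simp only [hh, inner_sub_right]
    ring
  have hLne : L ≠ 0 := hL.ne'
  have : L / 2 * (L⁻¹ ^ 2 * ‖g x - g y‖ ^ 2) = (2 * L)⁻¹ * ‖g x - g y‖ ^ 2 := by
    field_simp
  rw [this] at hfinal
  have h2L : (0:ℝ) < 2 * L := by linarith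
  set S := ‖g x - g y‖ ^ 2 with hS
  have hLinv : L⁻¹ * S = 2 * ((2 * L)⁻¹ * S) := by
    field_simp
  have hkey : (2 * L)⁻¹ * S ≤ h x - h y := by linarith
  have := mul_le_mul_of_nonneg_left hkey h2L.le
  have hcancel : 2 * L * ((2 * L)⁻¹ * S) = S := by
    field_simp
  rw [hcancel] at this
  rw [← hexp]
  linarith

lemma aux_young {u w : H} {ε : ℝ} (hε : 0 < ε) :
    ‖u + w‖ ^ 2 ≤ (1 + ε) * ‖u‖ ^ 2 + (1 + ε⁻¹) * ‖w‖ ^ 2 := by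
  have hexp : ‖u + w‖ ^ 2 = ‖u‖ ^ 2 + 2 * ⟪u, w⟫ + ‖w‖ ^ 2 := norm_add_sq_real u w
  have hcs : ⟪u, w⟫ ≤ ‖u‖ * ‖w‖ := real_inner_le_norm u w
  have h1 : 2 * (‖u‖ * ‖w‖) ≤ ε * ‖u‖ ^ 2 + ε⁻¹ * ‖w‖ ^ 2 := by
    have hε' : 0 < ε⁻¹ := inv_pos.mpr hε
    nlinarith [mul_nonneg hε'.le (sq_nonneg (ε * ‖u‖ - ‖w‖)), mul_inv_cancel₀ hε.ne',
      sq_nonneg (ε * ‖u‖ - ‖w‖)]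
  linarith
end aux3

set_option maxHeartbeats 1000000 in
/-- One-step linear-combination bound for SGD (per-step form of Lemma 4.2), with
`a = (1-γL)/(1+γL)`, `b = -1`, `c = 2γL/(1+γL)`, `v = γσ_*²/(1-γL)`
(and `inf f = F x_*` since `x_*` is a minimizer). -/
theorem sgd_one_step_linear_combination
    {H : Type*} [NormedAddCommGroup H] [InnerProductSpace ℝ H] [CompleteSpace H]
    {ι : Type*} [MeasurableSpace ι] (D : Measure ι) [IsProbabilityMeasure D]
    (f : ι → H → ℝ) (g : ι → H → H)
    (hgrad : ∀ i x, HasGradientAt (f i) (g i x) x)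
    (hfmeas : ∀ x, Measurable fun i => f i x)
    (hfint : ∀ x, Integrable (fun i => f i x) D)
    (hgmeas : ∀ x, AEStronglyMeasurable (fun i => g i x) D)
    (F : H → ℝ) (hF : ∀ x, F x = ∫ i, f i x ∂D)
    (hconv : ∀ i, ConvexOn ℝ Set.univ (f i))
    (L : ℝ) (hL : 0 < L) (hlip : ∀ i, LipschitzWith L.toNNReal (g i))
    (xstar : H) (hmin : ∀ y, F xstar ≤ F y)
    (σ2 : ℝ) (hσ2 : σ2 = ∫ i, ‖g i xstar‖ ^ 2 ∂D)
    (hσint : Integrable (fun i => ‖g i xstar‖ ^ 2) D)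
    (γ : ℝ) (hγ0 : 0 < γ) (hγL : γ * L < 1)
    (a b c v : ℝ)
    (ha : a = (1 - γ * L) / (1 + γ * L)) (hb : b = -1)
    (hc : c = 2 * γ * L / (1 + γ * L)) (hv : v = γ * σ2 / (1 - γ * L)) :
    ∀ x z : H,
      a * F x + b * F z + c * F xstar ≤
        (1 / (2 * γ)) * ‖x - z‖ ^ 2 -
          (1 / (2 * γ)) * (∫ i, ‖(x - γ • g i x) - z‖ ^ 2 ∂D) + v := by
  subst hb
  intro x z
  have hγL0 : 0 < γ * L := mul_pos hγ0 hL
  have h1p : (0:ℝ) < 1 + γ * L := by linarith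
  have h1m : (0:ℝ) < 1 - γ * L := by linarith
  set ε : ℝ := (1 - γ * L) / (1 + γ * L) with hε
  have hεpos : 0 < ε := div_pos h1m h1p
  -- integrability of g at xstar
  have bnd1 : Integrable (fun i => ‖g i xstar‖ ^ 2 + 1) D := hσint.add (integrable_const 1)
  have int_gs : Integrable (fun i => g i xstar) D := by
    refine Integrable.mono' bnd1 (hgmeas xstar) ?_
    filter_upwards with i
    nlinarith [norm_nonneg (g i xstar), sq_nonneg (‖g i xstar‖ - 1)]
  -- the mean gradient at the minimizer vanishes
  set Gs : H := ∫ i, g i xstar ∂D with hGs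
  have hswap : ∀ w : H, (∫ i, ⟪g i xstar, w⟫ ∂D) = ⟪Gs, w⟫ := by
    intro w
    have hcg : (fun i => ⟪g i xstar, w⟫) = fun i => ⟪w, g i xstar⟫ := by
      funext i; exact real_inner_comm _ _
    rw [hcg, integral_inner int_gs w, real_inner_comm]
  have hGs0 : Gs = 0 := by
    have key : ∀ w : H, 0 ≤ ⟪Gs, w⟫ + L / 2 * ‖w‖ ^ 2 := by
      intro w
      have hptw : ∀ i, f i (xstar + w) ≤ f i xstar + ⟪g i xstar, w⟫ + L / 2 * ‖w‖ ^ 2 := by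
        intro i
        have h := aux_descent hL (hgrad i) (hlip i) xstar (xstar + w)
        simpa using h
      have i1 : Integrable (fun i => f i xstar + ⟪g i xstar, w⟫) D :=
        (hfint xstar).add (int_gs.inner_const w)
      have int_rhs : Integrable (fun i => f i xstar + ⟪g i xstar, w⟫ + L / 2 * ‖w‖ ^ 2) D :=
        i1.add (integrable_const _)
      have hIle : F (xstar + w) ≤ F xstar + ⟪Gs, w⟫ + L / 2 * ‖w‖ ^ 2 := by
        rw [hF, hF]
        calc (∫ i, f i (xstar + w) ∂D)
            ≤ ∫ i, (f i xstar + ⟪g i xstar, w⟫ + L / 2 * ‖w‖ ^ 2) ∂D :=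
              integral_mono (hfint _) int_rhs hptw
          _ = (∫ i, f i xstar ∂D) + ⟪Gs, w⟫ + L / 2 * ‖w‖ ^ 2 := by
              rw [integral_add i1 (integrable_const _),
                integral_add (hfint xstar) (int_gs.inner_const w), integral_const, hswap]
              simp
      linarith [hmin (xstar + w)]
    have h1 := key (-(L⁻¹ • Gs))
    have he2 : ⟪Gs, -(L⁻¹ • Gs)⟫ = -(L⁻¹ * ‖Gs‖ ^ 2) := by
      rw [inner_neg_right, real_inner_smul_right, real_inner_self_eq_norm_sq]
    have he3 : ‖-(L⁻¹ • Gs)‖ ^ 2 = L⁻¹ ^ 2 * ‖Gs‖ ^ 2 := by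
      rw [norm_neg, norm_smul, Real.norm_eq_abs, abs_of_nonneg (inv_nonneg.mpr hL.le), mul_pow]
    rw [he2, he3] at h1
    have hc1 : L / 2 * (L⁻¹ ^ 2 * ‖Gs‖ ^ 2) = (2 * L)⁻¹ * ‖Gs‖ ^ 2 := by
      field_simp
    rw [hc1] at h1
    have h2Li : (0:ℝ) < (2 * L)⁻¹ := by positivity
    have hLinv2 : L⁻¹ * ‖Gs‖ ^ 2 = 2 * ((2 * L)⁻¹ * ‖Gs‖ ^ 2) := by
      field_simp
    have hsq : ‖Gs‖ ^ 2 ≤ 0 := by nlinarith [h1]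
    have hnorm0 : ‖Gs‖ = 0 := by nlinarith [norm_nonneg Gs, sq_nonneg ‖Gs‖]
    exact norm_eq_zero.mp hnorm0
  have hinner0 : (∫ i, ⟪g i xstar, x - xstar⟫ ∂D) = 0 := by
    rw [hswap, hGs0, inner_zero_left]
  -- integrability at x
  have hgb : ∀ i, ‖g i x‖ ≤ ‖g i xstar‖ + L * ‖x - xstar‖ := by
    intro i
    have hd := (hlip i).dist_le_mul x xstar
    rw [dist_eq_norm, dist_eq_norm, Real.coe_toNNReal L hL.le] at hd
    calc ‖g i x‖ = ‖g i xstar + (g i x - g i xstar)‖ := by congr 1; abel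
      _ ≤ ‖g i xstar‖ + ‖g i x - g i xstar‖ := norm_add_le _ _
      _ ≤ ‖g i xstar‖ + L * ‖x - xstar‖ := by linarith
  have bnd2 : Integrable (fun i => ‖g i xstar‖ + L * ‖x - xstar‖) D :=
    int_gs.norm.add (integrable_const _)
  have int_gx : Integrable (fun i => g i x) D := by
    refine Integrable.mono' bnd2 (hgmeas x) ?_
    filter_upwards with i using hgb i
  have int_gx_sq : Integrable (fun i => ‖g i x‖ ^ 2) D := by
    have bnd3 : Integrable (fun i => 2 * ‖g i xstar‖ ^ 2 + 2 * (L * ‖x - xstar‖) ^ 2) D :=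
      (hσint.const_mul 2).add (integrable_const _)
    refine Integrable.mono' bnd3 ?_ ?_
    · exact (hgmeas x).norm.pow 2
    · filter_upwards with i
      rw [Real.norm_eq_abs, abs_of_nonneg (by positivity)]
      nlinarith [mul_self_le_mul_self (norm_nonneg (g i x)) (hgb i),
        sq_nonneg (‖g i xstar‖ - L * ‖x - xstar‖), norm_nonneg (g i x)]
  have int_inner : Integrable (fun i => ⟪g i x, x - z⟫) D := int_gx.inner_const _
  have int_inner_s : Integrable (fun i => ⟪g i xstar, x - xstar⟫) D := int_gs.inner_const _
  -- pointwise inequality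
  have hpt : ∀ i,
      f i x - f i z - γ * L * (1 + ε) * (f i x - f i xstar - ⟪g i xstar, x - xstar⟫)
        - γ / 2 * (1 + ε⁻¹) * ‖g i xstar‖ ^ 2
      ≤ ⟪g i x, x - z⟫ - γ / 2 * ‖g i x‖ ^ 2 := by
    intro i
    have h1 := aux_convex_grad_ineq (hconv i) (hgrad i) x z
    have hzx : ⟪g i x, z - x⟫ = -⟪g i x, x - z⟫ := by
      rw [← inner_neg_right]; congr 1; abel
    rw [hzx] at h1
    have h3 : ‖g i x - g i xstar‖ ^ 2
        ≤ 2 * L * (f i x - f i xstar - ⟪g i xstar, x - xstar⟫) :=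
      aux_cocoercive hL (hconv i) (hgrad i) (hlip i) x xstar
    have h2 : ‖g i x‖ ^ 2 ≤ (1 + ε) * ‖g i x - g i xstar‖ ^ 2 + (1 + ε⁻¹) * ‖g i xstar‖ ^ 2 := by
      have h := aux_young (u := g i x - g i xstar) (w := g i xstar) hεpos
      simpa using h
    have hεp1 : (0:ℝ) ≤ 1 + ε := by linarith
    have hchain : ‖g i x‖ ^ 2
        ≤ (1 + ε) * (2 * L * (f i x - f i xstar - ⟪g i xstar, x - xstar⟫))
          + (1 + ε⁻¹) * ‖g i xstar‖ ^ 2 := by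
      exact h2.trans (add_le_add_left (mul_le_mul_of_nonneg_left h3 hεp1) _)
    have hγ2 : (0:ℝ) ≤ γ / 2 := by linarith
    have hmul := mul_le_mul_of_nonneg_left hchain hγ2
    linarith [hmul, h1]
  -- integrate
  have iA : Integrable (fun i => f i x - f i z) D := (hfint x).sub (hfint z)
  have iB0 : Integrable (fun i => f i x - f i xstar) D := (hfint x).sub (hfint xstar)
  have iB : Integrable (fun i => f i x - f i xstar - ⟪g i xstar, x - xstar⟫) D :=
    iB0.sub int_inner_s
  have iB' : Integrable
      (fun i => γ * L * (1 + ε) * (f i x - f i xstar - ⟪g i xstar, x - xstar⟫)) D :=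
    iB.const_mul _
  have iC : Integrable (fun i =>
      f i x - f i z - γ * L * (1 + ε) * (f i x - f i xstar - ⟪g i xstar, x - xstar⟫)) D :=
    iA.sub iB'
  have iD : Integrable (fun i => γ / 2 * (1 + ε⁻¹) * ‖g i xstar‖ ^ 2) D := hσint.const_mul _
  have int_lhs : Integrable (fun i =>
      f i x - f i z - γ * L * (1 + ε) * (f i x - f i xstar - ⟪g i xstar, x - xstar⟫)
        - γ / 2 * (1 + ε⁻¹) * ‖g i xstar‖ ^ 2) D := iC.sub iD
  have iE : Integrable (fun i => γ / 2 * ‖g i x‖ ^ 2) D := int_gx_sq.const_mul _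
  have int_rhs : Integrable (fun i => ⟪g i x, x - z⟫ - γ / 2 * ‖g i x‖ ^ 2) D :=
    int_inner.sub iE
  have hIneq := integral_mono int_lhs int_rhs hpt
  set Ix := ∫ i, ⟪g i x, x - z⟫ ∂D with hIx
  set Sx := ∫ i, ‖g i x‖ ^ 2 ∂D with hSx
  have hIL : (∫ i, (f i x - f i z
        - γ * L * (1 + ε) * (f i x - f i xstar - ⟪g i xstar, x - xstar⟫)
        - γ / 2 * (1 + ε⁻¹) * ‖g i xstar‖ ^ 2) ∂D)
      = (F x - F z) - γ * L * (1 + ε) * (F x - F xstar) - γ / 2 * (1 + ε⁻¹) * σ2 := by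
    rw [integral_sub iC iD, integral_sub iA iB', integral_sub (hfint x) (hfint z),
      integral_const_mul _ _, integral_sub iB0 int_inner_s,
      integral_sub (hfint x) (hfint xstar), integral_const_mul _ _,
      hinner0, ← hF x, ← hF z, ← hF xstar, ← hσ2]
    ring
  have hIR : (∫ i, (⟪g i x, x - z⟫ - γ / 2 * ‖g i x‖ ^ 2) ∂D) = Ix - γ / 2 * Sx := by
    rw [integral_sub int_inner iE, integral_const_mul _ _]
  rw [hIL, hIR] at hIneq
  -- expand the squared norm
  have hExpInt : (∫ i, ‖(x - γ • g i x) - z‖ ^ 2 ∂D)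
      = ‖x - z‖ ^ 2 - 2 * γ * Ix + γ ^ 2 * Sx := by
    have hcongr : (fun i => ‖(x - γ • g i x) - z‖ ^ 2)
        = fun i => ‖x - z‖ ^ 2 - 2 * γ * ⟪g i x, x - z⟫ + γ ^ 2 * ‖g i x‖ ^ 2 := by
      funext i
      have he : (x - γ • g i x) - z = (x - z) - γ • g i x := by abel
      rw [he, norm_sub_sq_real, real_inner_smul_right, real_inner_comm (x - z) (g i x),
        norm_smul, Real.norm_eq_abs, abs_of_nonneg hγ0.le, mul_pow]
      ring
    have iF : Integrable (fun i => 2 * γ * ⟪g i x, x - z⟫) D := int_inner.const_mul _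
    have iG : Integrable (fun i => γ ^ 2 * ‖g i x‖ ^ 2) D := int_gx_sq.const_mul _
    have iH : Integrable (fun i => ‖x - z‖ ^ 2 - 2 * γ * ⟪g i x, x - z⟫) D :=
      (integrable_const _).sub iF
    rw [hcongr, integral_add iH iG, integral_sub (integrable_const _) iF,
      integral_const, integral_const_mul _ _, integral_const_mul _ _]
    simp [hIx, hSx]
  rw [hExpInt]
  -- constants
  have hca : γ * L * (1 + ε) = c := by
    rw [hc, hε]
    field_simp
    ring
  have hva : γ / 2 * (1 + ε⁻¹) * σ2 = v := by
    rw [hv, hε]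
    rw [inv_div]
    field_simp
    ring
  have ha' : a = 1 - c := by
    rw [ha, hε, hc]
    field_simp [h1p.ne']
    ring
  have hgoalL : a * F x + (-1 : ℝ) * F z + c * F xstar
      = (F x - F z) - γ * L * (1 + ε) * (F x - F xstar) := by
    rw [ha', ← hca]
    ring
  have hRHS : (1 / (2 * γ)) * ‖x - z‖ ^ 2
      - (1 / (2 * γ)) * (‖x - z‖ ^ 2 - 2 * γ * Ix + γ ^ 2 * Sx) + v
      = Ix - γ / 2 * Sx + v := by
    field_simp
    ring
  rw [hRHS, hgoalL]
  linarith [hIneq, hva]
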